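/- Let q = 2ᵗ with t ≥ 1, let 𝔽_q be a finite field of order q, let m ≥ 2, and let H be the point-by-line incidence matrix over 𝔽₂ of EG₁(m,q), with rows indexed by the nonzero vectors of 𝔽_q^m and columns indexed by the lines of EG₁(m,q). Then the rank of H·Hᵀ over 𝔽₂ equals (q^m − q)/(q − 1) = (2^{tm} − 2ᵗ)/(2ᵗ − 1). -/

import Mathlib

open scoped Classical

/-- The lines of the incidence structure `EG₁(m, q)`: cosets of the one-dimensional
linear subspaces of `𝔽_q^m` that do not contain the zero vector. -/
def EGLine (F : Type) [Field F] (m : ℕ) : Type :=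
  {ℓ : Set (Fin m → F) // (∃ (W : Submodule F (Fin m → F)) (a : Fin m → F),
    Module.finrank F W = 1 ∧ ℓ = (a + ·) '' (W : Set (Fin m → F))) ∧ (0 : Fin m → F) ∉ ℓ}

noncomputable instance (F : Type) [Field F] [Fintype F] (m : ℕ) :
    Fintype (EGLine F m) := by
  unfold EGLine; exact Fintype.ofFinite _

section Aux
variable {F : Type} [Field F] {m : ℕ}

lemma exists_span_eq {V : Type*} [AddCommGroup V] [Module F V] (W : Submodule F V)
    (hW : Module.finrank F W = 1) : ∃ v : V, v ≠ 0 ∧ W = Submodule.span F {v} := by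
  have : FiniteDimensional F W := FiniteDimensional.of_finrank_eq_succ hW
  have : Nontrivial W := by
    have h1 : 0 < Module.finrank F W := by omega
    exact Module.finrank_pos_iff.mp h1
  obtain ⟨⟨v, hvW⟩, hv⟩ := exists_ne (0 : W)
  have hv0 : v ≠ 0 := by simpa [Subtype.ext_iff] using hv
  refine ⟨v, hv0, ?_⟩
  refine (Submodule.eq_of_le_of_finrank_le ?_ ?_).symm
  · rwa [Submodule.span_singleton_le_iff_mem]
  · rw [hW, finrank_span_singleton hv0]

/-- A line, described from one of its points: it is `x + span {v}` for some `v ≠ 0`. -/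
lemma EGLine.exists_dir (ℓ : EGLine F m) {x : Fin m → F} (hx : x ∈ ℓ.1) :
    ∃ v : Fin m → F, v ≠ 0 ∧ ℓ.1 = (x + ·) '' (Submodule.span F {v} : Set (Fin m → F)) := by
  obtain ⟨⟨W, a, hW, hWa⟩, -⟩ := ℓ.2
  obtain ⟨v, hv0, hWv⟩ := exists_span_eq W hW
  refine ⟨v, hv0, ?_⟩
  subst hWv
  rw [hWa] at hx ⊢
  obtain ⟨w, hw, hxw⟩ := hx
  ext z
  constructor
  · rintro ⟨u, hu, rfl⟩
    exact ⟨u - w, sub_mem hu hw, by rw [← hxw]; show a + w + (u - w) = a + u; abel⟩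
  · rintro ⟨u, hu, rfl⟩
    exact ⟨u + w, add_mem hu hw, by rw [← hxw]; show a + (u + w) = a + w + u; abel⟩

/-- Two distinct points on a line are never proportional. -/
lemma EGLine.not_mem_span (ℓ : EGLine F m) {x y : Fin m → F} (hx : x ∈ ℓ.1) (hy : y ∈ ℓ.1)
    (hxy : x ≠ y) : y ∉ Submodule.span F {x} := by
  intro hmem
  obtain ⟨v, hv0, hℓ⟩ := ℓ.exists_dir hx
  have hx0 : x ≠ 0 := fun h => ℓ.2.2 (h ▸ hx)
  obtain ⟨c, rfl⟩ := Submodule.mem_span_singleton.1 hmem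
  -- y = c • x on the line, so (c-1) • x ∈ span v, c ≠ 1
  rw [hℓ] at hy
  obtain ⟨u, hu, huy⟩ := hy
  have hc1 : c ≠ 1 := by rintro rfl; rw [one_smul] at hxy; exact hxy rfl
  have hxv : x ∈ Submodule.span F {v} := by
    have huy' : x + u = c • x := huy
    have : u = (c - 1) • x := by linear_combination (norm := module) huy'
    have hu' : (c - 1) • x ∈ Submodule.span F {v} := this ▸ hu
    have := Submodule.smul_mem _ (c - 1)⁻¹ hu'
    rwa [smul_smul, inv_mul_cancel₀ (sub_ne_zero.2 hc1), one_smul] at this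
  apply ℓ.2.2
  rw [hℓ]
  exact ⟨-x, Submodule.neg_mem _ hxv, by abel⟩

/-- The unique line through `p` and a point `x` not proportional to `p`. -/
lemma existsUnique_line {p x : Fin m → F} (hp : p ≠ 0) (hx : x ∉ Submodule.span F {p}) :
    ∃! ℓ : EGLine F m, p ∈ ℓ.1 ∧ x ∈ ℓ.1 := by
  have hxp : x ≠ p := fun h => hx (by rw [h]; exact Submodule.mem_span_singleton_self p)
  have hd0 : x - p ≠ 0 := sub_ne_zero.2 hxp
  have h0 : (0 : Fin m → F) ∉ (p + ·) '' (Submodule.span F {x - p} : Set (Fin m → F)) := by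
    rintro ⟨u, hu, hu0⟩
    obtain ⟨c, rfl⟩ := Submodule.mem_span_singleton.1 hu
    rcases eq_or_ne c 0 with rfl | hc
    · simp only [zero_smul, add_zero] at hu0; exact hp hu0
    · apply hx
      have hxe : x = ((c - 1)/c) • p := by
        have hu0' : p + c • (x - p) = 0 := hu0
        have h2 : c • x = (c - 1) • p := by linear_combination (norm := module) hu0'
        rw [div_eq_mul_inv, mul_comm, mul_smul, ← h2, smul_smul, inv_mul_cancel₀ hc, one_smul]
      rw [hxe]
      exact Submodule.smul_mem _ _ (Submodule.mem_span_singleton_self p)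
  refine ⟨⟨(p + ·) '' (Submodule.span F {x - p} : Set (Fin m → F)),
    ⟨⟨Submodule.span F {x - p}, p, finrank_span_singleton hd0, rfl⟩, h0⟩⟩,
    ⟨⟨0, Submodule.zero_mem _, by simp⟩,
     ⟨x - p, Submodule.mem_span_singleton_self _, by show p + (x - p) = x; abel⟩⟩,
    ?_⟩
  rintro ℓ ⟨hpℓ, hxℓ⟩
  apply Subtype.ext
  have := ℓ.exists_dir hpℓ
  obtain ⟨v, hv0, hℓ⟩ := this
  rw [hℓ] at hxℓ
  obtain ⟨u, hu, hux⟩ := hxℓ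
  obtain ⟨c, rfl⟩ := Submodule.mem_span_singleton.1 hu
  have hc : c ≠ 0 := by
    rintro rfl
    simp only [zero_smul, add_zero] at hux
    exact hxp hux.symm
  have hux' : p + c • v = x := hux
  have hspan : Submodule.span F {x - p} = Submodule.span F {v} := by
    have hxpc : x - p = c • v := by rw [← hux']; abel
    rw [hxpc, Submodule.span_singleton_smul_eq (IsUnit.mk0 c hc) v]
  rw [hℓ]
  show (fun u => p + u) '' ↑(Submodule.span F {v}) = (fun u => p + u) '' ↑(Submodule.span F {x - p})
  rw [hspan]

end Aux
section Count
variable {F : Type} [Field F] [Fintype F] {m : ℕ}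

lemma card_ne_zero_scalars : Fintype.card {c : F // ¬ (c = 0)} = Fintype.card F - 1 := by
  rw [Fintype.card_subtype_compl, Fintype.card_subtype_eq]

lemma card_span_singleton {p : Fin m → F} (hp : p ≠ 0) :
    Fintype.card {x : Fin m → F // x ∈ Submodule.span F {p}} = Fintype.card F := by
  refine (Fintype.card_of_bijective (f := fun c : F => (⟨c • p,
    Submodule.smul_mem _ _ (Submodule.mem_span_singleton_self p)⟩ :
      {x : Fin m → F // x ∈ Submodule.span F {p}})) ⟨?_, ?_⟩).symm
  · intro c c' h
    rw [Subtype.ext_iff] at h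
    exact smul_left_injective F hp h
  · rintro ⟨x, hx⟩
    obtain ⟨c, rfl⟩ := Submodule.mem_span_singleton.1 hx
    exact ⟨c, rfl⟩

lemma card_line_fiber {ℓ : EGLine F m} {p : Fin m → F} (hp : p ∈ ℓ.1) :
    Fintype.card {x : Fin m → F // x ∈ ℓ.1 ∧ x ≠ p} = Fintype.card F - 1 := by
  obtain ⟨v, hv0, hℓ⟩ := ℓ.exists_dir hp
  rw [← card_ne_zero_scalars (F := F)]
  refine (Fintype.card_of_bijective (f := fun c : {c : F // ¬ (c = 0)} =>
    (⟨p + c.1 • v, ?_, ?_⟩ : {x : Fin m → F // x ∈ ℓ.1 ∧ x ≠ p})) ⟨?_, ?_⟩).symm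
  · rw [hℓ]
    exact ⟨c.1 • v, Submodule.smul_mem _ _ (Submodule.mem_span_singleton_self v), rfl⟩
  · intro h
    have : c.1 • v = 0 := by
      have := congrArg (fun z => z - p) h
      simpa using this
    rcases smul_eq_zero.1 this with h' | h'
    · exact c.2 h'
    · exact hv0 h'
  · rintro ⟨c, hc⟩ ⟨c', hc'⟩ h
    rw [Subtype.ext_iff] at h
    simp only [add_right_inj] at h
    exact Subtype.ext (smul_left_injective F hv0 h)
  · rintro ⟨x, hx, hxp⟩
    rw [hℓ] at hx
    obtain ⟨u, hu, hux⟩ := hx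
    obtain ⟨c, rfl⟩ := Submodule.mem_span_singleton.1 hu
    have hc : ¬ (c = 0) := by
      rintro rfl
      apply hxp
      rw [← hux]
      simp
    exact ⟨⟨c, hc⟩, Subtype.ext hux⟩

/-- The double-counting equivalence: points off the span of `p` correspond to pairs
(line through `p`, point of that line other than `p`). -/
noncomputable def offSpanEquiv {p : Fin m → F} (hp : p ≠ 0) :
    {x : Fin m → F // x ∉ Submodule.span F {p}} ≃
      Σ ℓ : {ℓ : EGLine F m // p ∈ ℓ.1}, {x : Fin m → F // x ∈ ℓ.1.1 ∧ x ≠ p} where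
  toFun x :=
    ⟨⟨(existsUnique_line hp x.2).exists.choose, (existsUnique_line hp x.2).exists.choose_spec.1⟩,
      ⟨x.1, (existsUnique_line hp x.2).exists.choose_spec.2,
        fun h => x.2 (by rw [h]; exact Submodule.mem_span_singleton_self p)⟩⟩
  invFun y := ⟨y.2.1, y.1.1.not_mem_span y.1.2 y.2.2.1 (Ne.symm y.2.2.2)⟩
  left_inv x := Subtype.ext rfl
  right_inv := by
    rintro ⟨⟨ℓ, hℓ⟩, ⟨x, hx1, hx2⟩⟩
    have hxs : x ∉ Submodule.span F {p} := ℓ.not_mem_span hℓ hx1 (Ne.symm hx2)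
    refine Sigma.subtype_ext (Subtype.ext ?_) rfl
    exact (existsUnique_line hp hxs).unique
      (existsUnique_line hp hxs).exists.choose_spec ⟨hℓ, hx1⟩

lemma lines_through_mul {p : Fin m → F} (hp : p ≠ 0) :
    Fintype.card {ℓ : EGLine F m // p ∈ ℓ.1} * (Fintype.card F - 1)
      = Fintype.card F ^ m - Fintype.card F := by
  have h1 := Fintype.card_congr (offSpanEquiv hp)
  rw [Fintype.card_sigma] at h1
  have h2 : ∀ ℓ : {ℓ : EGLine F m // p ∈ ℓ.1},
      Fintype.card {x : Fin m → F // x ∈ ℓ.1.1 ∧ x ≠ p} = Fintype.card F - 1 :=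
    fun ℓ => card_line_fiber ℓ.2
  rw [Finset.sum_congr rfl (fun ℓ _ => h2 ℓ), Finset.sum_const, smul_eq_mul,
    Finset.card_univ] at h1
  rw [← h1, Fintype.card_subtype_compl, card_span_singleton hp]
  congr 1
  rw [Fintype.card_fun, Fintype.card_fin]

end Count
section Entry
variable {F : Type} [Field F] [Fintype F] {m : ℕ}

lemma even_lines_through {p : Fin m → F} (hp : p ≠ 0) (hq : Even (Fintype.card F))
    (hm : 1 ≤ m) : Even (Fintype.card {ℓ : EGLine F m // p ∈ ℓ.1}) := by
  have h := lines_through_mul hp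
  have hq1 : 1 ≤ Fintype.card F := Fintype.card_pos
  have hqm : Fintype.card F ≤ Fintype.card F ^ m := Nat.le_self_pow (by omega) _
  have heven : Even (Fintype.card F ^ m - Fintype.card F) := by
    rw [Nat.even_sub hqm]
    exact iff_of_true (by rw [Nat.even_pow]; exact ⟨hq, by omega⟩) hq
  have hodd : ¬ Even (Fintype.card F - 1) := by
    rw [Nat.even_sub hq1]
    simp [hq]
  rw [← h, Nat.even_mul] at heven
  tauto

lemma entry_formula (H : Matrix {p : Fin m → F // p ≠ 0} (EGLine F m) (ZMod 2))
    (hH : ∀ p ℓ, H p ℓ = if p.1 ∈ ℓ.1 then 1 else 0)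
    (hq : Even (Fintype.card F)) (hm : 1 ≤ m) (p p' : {p : Fin m → F // p ≠ 0}) :
    (H * H.transpose) p p' = if p'.1 ∈ Submodule.span F {p.1} then 0 else 1 := by
  rw [Matrix.mul_apply]
  simp only [Matrix.transpose_apply, hH]
  have hite : ∀ ℓ : EGLine F m,
      (if p.1 ∈ ℓ.1 then (1 : ZMod 2) else 0) * (if p'.1 ∈ ℓ.1 then 1 else 0)
        = if p.1 ∈ ℓ.1 ∧ p'.1 ∈ ℓ.1 then 1 else 0 := by
    intro ℓ; split_ifs with h1 h2 h3 <;> simp_all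
  rw [Finset.sum_congr rfl (fun ℓ _ => hite ℓ), Finset.sum_boole]
  by_cases hmem : p'.1 ∈ Submodule.span F {p.1}
  · rw [if_pos hmem]
    by_cases hpp : p' = p
    · subst hpp
      have hfilter : (Finset.univ.filter (fun ℓ : EGLine F m => p'.1 ∈ ℓ.1 ∧ p'.1 ∈ ℓ.1)).card
          = Fintype.card {ℓ : EGLine F m // p'.1 ∈ ℓ.1} := by
        rw [Fintype.card_subtype]
        congr 1
        ext ℓ
        simp
      rw [hfilter]
      obtain ⟨k, hk⟩ := even_lines_through p'.2 hq hm
      rw [hk]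
      push_cast
      ring_nf
      rw [show (2 : ZMod 2) = 0 by decide]
      ring
    · have hfilter : (Finset.univ.filter (fun ℓ : EGLine F m => p.1 ∈ ℓ.1 ∧ p'.1 ∈ ℓ.1)) = ∅ := by
        rw [Finset.filter_eq_empty_iff]
        rintro ℓ - ⟨h1, h2⟩
        exact ℓ.not_mem_span h1 h2 (fun h => hpp (Subtype.ext h.symm)) hmem
      rw [hfilter]
      simp
  · rw [if_neg hmem]
    obtain ⟨ℓ0, hℓ0, huniq⟩ := existsUnique_line p.2 hmem
    have hfilter : (Finset.univ.filter (fun ℓ : EGLine F m => p.1 ∈ ℓ.1 ∧ p'.1 ∈ ℓ.1)) = {ℓ0} := by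
      ext ℓ
      simp only [Finset.mem_filter, Finset.mem_univ, true_and, Finset.mem_singleton]
      exact ⟨fun h => huniq ℓ h, fun h => h ▸ hℓ0⟩
    rw [hfilter]
    simp

end Entry
section Rank
open Module Submodule

lemma natCast_zmod_two_of_odd {n : ℕ} (h : Odd n) : (n : ZMod 2) = 1 := by
  obtain ⟨k, rfl⟩ := h
  push_cast
  rw [show (2 : ZMod 2) = 0 by decide]
  ring

lemma rank_block {α ι : Type} [Fintype α] [Fintype ι] (f : α → ι)
    (hf : Function.Surjective f) (M : Matrix α α (ZMod 2))
    (hM : ∀ a b, M a b = if f a = f b then 0 else 1) (hodd : Odd (Fintype.card ι)) :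
    M.rank = Fintype.card ι - 1 := by
  classical
  set e : ι → (α → ZMod 2) := fun i a => if f a = i then 1 else 0 with he
  set u : α → ZMod 2 := fun _ => 1 with hu
  set g : ι → (α → ZMod 2) := fun i => u + e i with hg
  have hcol : M.transpose = g ∘ f := by
    funext b a
    simp only [Matrix.transpose_apply, hM, hg, he, hu, Function.comp_apply, Pi.add_apply]
    split_ifs <;> decide
  have hrange : Set.range M.transpose = Set.range g := by
    rw [hcol, Set.range_comp, hf.range_eq, Set.image_univ]
  rw [Matrix.rank_eq_finrank_span_cols, show Set.range M.col = Set.range M.transpose from rfl, hrange]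
  set V : Submodule (ZMod 2) (α → ZMod 2) := span (ZMod 2) (Set.range g) with hV
  set W : Submodule (ZMod 2) (α → ZMod 2) := span (ZMod 2) (Set.range e) with hW
  -- e is linearly independent
  have he_li : LinearIndependent (ZMod 2) e := by
    rw [Fintype.linearIndependent_iff]
    intro c hc i
    obtain ⟨a, rfl⟩ := hf i
    have := congrFun hc a
    simp only [Finset.sum_apply, Pi.smul_apply, he, smul_eq_mul, mul_ite, mul_one, mul_zero,
      Pi.zero_apply, Finset.sum_ite_eq] at this
    simpa using this
  have hWcard : finrank (ZMod 2) W = Fintype.card ι := finrank_span_eq_card he_li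
  -- u is the sum of all the e i
  have husum : u = ∑ i : ι, e i := by
    funext a
    simp only [hu, Finset.sum_apply, he, Finset.sum_ite_eq, Finset.mem_univ, if_true]
  have heW : ∀ i, e i ∈ W := fun i => subset_span ⟨i, rfl⟩
  have huW : u ∈ W := husum ▸ Submodule.sum_mem _ fun i _ => heW i
  have hVW : V ≤ W := span_le.2 (by rintro x ⟨i, rfl⟩; exact add_mem huW (heW i))
  -- the "sum over representatives" functional
  set rep : ι → α := fun i => (hf i).choose with hrep
  have hrep_spec : ∀ i, f (rep i) = i := fun i => (hf i).choose_spec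
  set σ : (α → ZMod 2) →ₗ[ZMod 2] ZMod 2 := ∑ i : ι, LinearMap.proj (rep i) with hσ
  have hσ_apply : ∀ x : α → ZMod 2, σ x = ∑ i : ι, x (rep i) := by
    intro x; simp [hσ]
  have hσe : ∀ j, σ (e j) = 1 := by
    intro j
    rw [hσ_apply]
    simp only [he, hrep_spec, Finset.sum_ite_eq', Finset.mem_univ, if_true]
  have hσu : σ u = 1 := by
    rw [hσ_apply]
    simp only [hu, Finset.sum_const, Finset.card_univ, nsmul_eq_mul, mul_one]
    exact natCast_zmod_two_of_odd hodd
  have hσg : ∀ i, σ (g i) = 0 := by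
    intro i
    simp only [hg, map_add, hσe, hσu]
    decide
  have hVker : V ≤ LinearMap.ker σ := span_le.2 (by rintro x ⟨i, rfl⟩; exact hσg i)
  have : Nonempty ι := Fintype.card_pos_iff.1 hodd.pos
  obtain ⟨i0⟩ := this
  have hei0 : e i0 ∉ V := fun h => by
    have := hVker h
    rw [LinearMap.mem_ker, hσe] at this
    exact one_ne_zero this
  -- upper bound
  have hlt : V < W := lt_of_le_of_ne hVW (fun h => hei0 (h ▸ heW i0))
  have hupper : finrank (ZMod 2) V < Fintype.card ι := hWcard ▸ Submodule.finrank_lt_finrank_of_lt hlt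
  -- lower bound
  have hsub : W ≤ V ⊔ span (ZMod 2) {e i0} := by
    rw [hW, span_le]
    rintro x ⟨i, rfl⟩
    have h11 : (1 : ZMod 2) + 1 = 0 := by decide
    have hgi : g i + g i0 = e i + e i0 := by
      funext a
      simp only [hg, Pi.add_apply, hu]
      linear_combination h11
    have h1 : e i + e i0 ∈ V := hgi ▸ add_mem (subset_span ⟨i, rfl⟩) (subset_span ⟨i0, rfl⟩)
    have h2 : e i = (e i + e i0) + e i0 := by
      funext a
      simp only [Pi.add_apply]
      linear_combination -(e i0 a) * h11
    rw [h2]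
    exact add_mem (Submodule.mem_sup_left h1)
      (Submodule.mem_sup_right (mem_span_singleton_self _))
  have hei0ne : e i0 ≠ 0 := by
    intro h
    have := congrFun h (rep i0)
    simp only [he, hrep_spec, if_pos rfl, Pi.zero_apply] at this
    exact one_ne_zero this
  have hspan1 : finrank (ZMod 2) (span (ZMod 2) ({e i0} : Set (α → ZMod 2))) = 1 :=
    finrank_span_singleton hei0ne
  have hsum := Submodule.finrank_sup_add_finrank_inf_eq V (span (ZMod 2) ({e i0} : Set (α → ZMod 2)))
  have hmono := Submodule.finrank_mono hsub
  have hlower : Fintype.card ι ≤ finrank (ZMod 2) V + 1 := by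
    rw [hWcard] at hmono
    omega
  omega

end Rank
section Proj
variable (F : Type) [Field F] (m : ℕ)

/-- Proportionality equivalence on nonzero vectors. -/
def projSetoid : Setoid {p : Fin m → F // p ≠ 0} where
  r p p' := p'.1 ∈ Submodule.span F {p.1}
  iseqv := by
    constructor
    · intro p; exact Submodule.mem_span_singleton_self _
    · rintro p p' h
      obtain ⟨c, hc⟩ := Submodule.mem_span_singleton.1 h
      have hc0 : c ≠ 0 := by rintro rfl; rw [zero_smul] at hc; exact p'.2 hc.symm
      refine Submodule.mem_span_singleton.2 ⟨c⁻¹, ?_⟩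
      rw [← hc, smul_smul, inv_mul_cancel₀ hc0, one_smul]
    · rintro p p' p'' h1 h2
      obtain ⟨c, hc⟩ := Submodule.mem_span_singleton.1 h1
      obtain ⟨d, hd⟩ := Submodule.mem_span_singleton.1 h2
      exact Submodule.mem_span_singleton.2 ⟨d * c, by rw [← hd, ← hc, smul_smul]⟩

variable {F m}
variable [Fintype F]

lemma card_proj_fiber (C : Quotient (projSetoid F m)) :
    Fintype.card {p : {p : Fin m → F // p ≠ 0} // Quotient.mk (projSetoid F m) p = C}
      = Fintype.card F - 1 := by
  obtain ⟨p0, rfl⟩ := Quotient.exists_rep C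
  rw [← card_ne_zero_scalars (F := F)]
  refine (Fintype.card_of_bijective (f := fun c : {c : F // ¬ (c = 0)} =>
    (⟨⟨c.1 • p0.1, smul_ne_zero c.2 p0.2⟩, ?_⟩ :
      {p : {p : Fin m → F // p ≠ 0} // Quotient.mk (projSetoid F m) p = _})) ⟨?_, ?_⟩).symm
  · refine Quotient.sound ?_
    show p0.1 ∈ Submodule.span F {c.1 • p0.1}
    refine Submodule.mem_span_singleton.2 ⟨c.1⁻¹, ?_⟩
    rw [smul_smul, inv_mul_cancel₀ c.2, one_smul]
  · intro c c' h
    simp only [Subtype.mk.injEq] at h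
    exact Subtype.ext (smul_left_injective F p0.2 h)
  · rintro ⟨p, hp⟩
    have : (projSetoid F m).r p p0 := Quotient.eq''.1 hp
    obtain ⟨c, hc⟩ := Submodule.mem_span_singleton.1 this
    have hc0 : c ≠ 0 := by rintro rfl; rw [zero_smul] at hc; exact p0.2 hc.symm
    refine ⟨⟨c⁻¹, inv_ne_zero hc0⟩, ?_⟩
    refine Subtype.ext (Subtype.ext ?_)
    show c⁻¹ • p0.1 = p.1
    rw [← hc, smul_smul, inv_mul_cancel₀ hc0, one_smul]

lemma card_proj_mul :
    Fintype.card (Quotient (projSetoid F m)) * (Fintype.card F - 1)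
      = Fintype.card F ^ m - 1 := by
  have h1 := Fintype.card_congr (Equiv.sigmaFiberEquiv (Quotient.mk (projSetoid F m))).symm
  rw [Fintype.card_sigma] at h1
  rw [Finset.sum_congr rfl (fun C _ => card_proj_fiber C), Finset.sum_const, smul_eq_mul,
    Finset.card_univ] at h1
  rw [← h1, Fintype.card_subtype_compl, Fintype.card_subtype_eq, Fintype.card_fun,
    Fintype.card_fin]

end Proj
/-- for `q = 2ᵗ` and `m ≥ 2`, the point-by-line incidence matrix `H` over
`𝔽₂` of `EG₁(m, q)` (rows: nonzero vectors of `𝔽_q^m`) satisfies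
`rank(H · Hᵀ) = (q^m - q)/(q - 1) = (2^{tm} - 2ᵗ)/(2ᵗ - 1)` over `𝔽₂`. -/
theorem stmt_12 (t m : ℕ) (ht : 1 ≤ t) (hm : 2 ≤ m)
    (F : Type) [Field F] [Fintype F] (hF : Fintype.card F = 2 ^ t)
    (H : Matrix {p : Fin m → F // p ≠ 0} (EGLine F m) (ZMod 2))
    (hH : ∀ p ℓ, H p ℓ = if p.1 ∈ ℓ.1 then 1 else 0) :
    (H * H.transpose).rank = (2 ^ (t * m) - 2 ^ t) / (2 ^ t - 1) := by
  classical
  have hq2 : 2 ≤ Fintype.card F := Fintype.one_lt_card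
  have hqeven : Even (Fintype.card F) := by
    rw [hF]
    exact (Nat.even_pow (n := t)).2 ⟨even_two, by omega⟩
  have hM : ∀ p p', (H * H.transpose) p p' =
      @ite _ (Quotient.mk (projSetoid F m) p = Quotient.mk (projSetoid F m) p')
        (Classical.propDecidable _) 0 1 := by
    intro p p'
    rw [entry_formula H hH hqeven (by omega) p p']
    by_cases h : Quotient.mk (projSetoid F m) p = Quotient.mk (projSetoid F m) p'
    · rw [if_pos (show p'.1 ∈ Submodule.span F {p.1} from Quotient.eq''.1 h), if_pos h]
    · rw [if_neg (show ¬ p'.1 ∈ Submodule.span F {p.1} from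
        fun hmem => h (Quotient.sound hmem)), if_neg h]
  have hsurj : Function.Surjective (Quotient.mk (projSetoid F m)) :=
    fun C => Quotient.exists_rep C
  have hNmul := card_proj_mul (F := F) (m := m)
  set N := Fintype.card (Quotient (projSetoid F m)) with hN
  set q := Fintype.card F with hq
  have hqm : q ≤ q ^ m := Nat.le_self_pow (by omega) _
  have hoddN : Odd N := by
    have hodd : Odd (q ^ m - 1) := by
      refine Nat.Even.sub_odd (by omega) ?_ odd_one
      exact (Nat.even_pow (n := m)).2 ⟨hqeven, by omega⟩
    rw [← hNmul] at hodd
    exact (Nat.odd_mul.1 hodd).1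
  have hrank := rank_block _ hsurj (H * H.transpose) hM hoddN
  rw [hrank, ← hN]
  have hN1 : 1 ≤ N := hoddN.pos
  rw [pow_mul, ← hF]
  obtain ⟨k, hk⟩ := Nat.exists_eq_add_of_le hqm
  have hkey : q ^ m - q = (N - 1) * (q - 1) := by
    rw [Nat.sub_mul, one_mul, hNmul, hk]
    omega
  rw [hkey, Nat.mul_div_cancel _ (by omega : 0 < q - 1)]
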